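/- arXiv:2605.26398 — 3 statements merged into one kernel-verified Lean document; each statement's English description precedes it below -/
import Mathlib

section
/- Let (𝔞, M) be a Jordan–Lefschetz pair over a field K of characteristic 0 and let 𝔤 = llv(𝔞, M), graded by 𝔤_k = 𝔤 ∩ End(M)_k. Let 𝔥 = ⊕_{k∈ℤ} 𝔥_k be a graded Lie algebra over K (a Lie algebra with a direct sum decomposition satisfying [𝔥_i, 𝔥_j] ⊆ 𝔥_{i+j}) and let φ : 𝔤 → 𝔥 be a Lie algebra homomorphism with φ(𝔤_k) ⊆ 𝔥_k for all k. If the restriction φ₂ : 𝔤₂ → 𝔥₂ of φ to the degree 2 parts is injective, then φ is injective. -/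
open LinearMap TensorProduct

attribute [local instance 100] LieRing.ofAssociativeRing

section Defs

variable {K : Type} [Field K] {M : Type} [AddCommGroup M] [Module K M]

/-- `e` is a linear endomorphism of degree `n` with respect to the grading `gr`. -/
def HasDeg (gr : ℤ → Submodule K M) (n : ℤ) (e : Module.End K M) : Prop :=
  ∀ k : ℤ, ∀ x ∈ gr k, e x ∈ gr (k + n)

/-- `e` is a degree-2 endomorphism having the hard Lefschetz property:
for every `k ∈ ℕ` the `k`-fold composite `e^k : M_{-k} → M_k` is an isomorphism. -/
def HardLef (gr : ℤ → Submodule K M) (e : Module.End K M) : Prop :=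
  HasDeg gr 2 e ∧ ∀ k : ℕ,
    (∀ x ∈ gr (-(k : ℤ)), (e ^ k) x = 0 → x = 0) ∧
    (∀ y ∈ gr (k : ℤ), ∃ x ∈ gr (-(k : ℤ)), (e ^ k) x = y)

/-- `h` is the grading operator: multiplication by `k` on the degree-`k` part. -/
def IsGradingOp (gr : ℤ → Submodule K M) (h : Module.End K M) : Prop :=
  ∀ k : ℤ, ∀ x ∈ gr k, h x = (k : K) • x

/-- The generating set of the LLV algebra: for each operator `e'` of the given action
(`P e'`) with the hard Lefschetz property, the sl₂-triple `(e', h, f)`, where `f` is the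
(unique) endomorphism of degree `-2` with `⁅e', f⁆ = h`. -/
def llvGen (gr : ℤ → Submodule K M) (h : Module.End K M)
    (P : Module.End K M → Prop) : Set (Module.End K M) :=
  {h} ∪ {x | ∃ e', P e' ∧ HardLef gr e' ∧
      (x = e' ∨ (HasDeg gr (-2) x ∧ ⁅e', x⁆ = h))}

/-- The LLV algebra: the Lie subalgebra of `gl(M)` generated by the sl₂-triples
`(e_a, h, f_a)` arising from the elements `a` with the hard Lefschetz property. -/
def llv (gr : ℤ → Submodule K M) (h : Module.End K M)
    (P : Module.End K M → Prop) : LieSubalgebra K (Module.End K M) :=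
  LieSubalgebra.lieSpan K (Module.End K M) (llvGen gr h P)

/-- The Lie subalgebra `L ⊆ gl(M)` is concentrated in degrees `-2`, `0` and `2`. -/
def ConcJL (gr : ℤ → Submodule K M) (L : LieSubalgebra K (Module.End K M)) : Prop :=
  ∀ x ∈ L, ∃ u v w, u ∈ L ∧ v ∈ L ∧ w ∈ L ∧
    HasDeg gr (-2) u ∧ HasDeg gr 0 v ∧ HasDeg gr 2 w ∧ x = u + v + w

end Defs

section Aux

variable {K : Type} [Field K]

private lemma aux_eq_zero {N : Type} [AddCommGroup N] [Module K N] {gr : ℤ → Submodule K N}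
    (hgr : DirectSum.IsInternal gr) {i : ℤ} {a : N} (ha : a ∈ gr i)
    (ha' : a ∈ ⨆ (j) (_ : j ≠ i), gr j) : a = 0 :=
  Submodule.disjoint_def.mp (hgr.submodule_iSupIndep i) a ha ha'

private lemma aux_mem_biSup {N : Type} [AddCommGroup N] [Module K N] {gr : ℤ → Submodule K N}
    {i j : ℤ} (hj : j ≠ i) {a : N} (ha : a ∈ gr j) :
    a ∈ ⨆ (l) (_ : l ≠ i), gr l :=
  Submodule.mem_iSup_of_mem j (Submodule.mem_iSup_of_mem hj ha)

private lemma aux_ext {M : Type} [AddCommGroup M] [Module K M] {gr : ℤ → Submodule K M}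
    (hgr : DirectSum.IsInternal gr) {f g : Module.End K M}
    (H : ∀ k : ℤ, ∀ x ∈ gr k, f x = g x) : f = g := by
  ext m
  have hm : m ∈ ⨆ k, gr k := by rw [hgr.submodule_iSup_eq_top]; trivial
  exact Submodule.iSup_induction gr (motive := fun m => f m = g m) hm H (by simp)
    (fun x y hx hy => by simp [map_add, hx, hy])

end Aux

/-- For a Jordan–Lefschetz pair `(𝔞, M)` with `𝔤 = llv(𝔞, M)`, a degree-preserving Lie
algebra homomorphism `φ : 𝔤 → 𝔥` to a graded Lie algebra `𝔥` which is injective on the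
degree-2 parts is injective. -/
theorem stmt_0 {K : Type} [Field K] [CharZero K]
    {M : Type} [AddCommGroup M] [Module K M] [FiniteDimensional K M]
    (gr : ℤ → Submodule K M) (hgr : DirectSum.IsInternal gr)
    {𝔞 : Type} [AddCommGroup 𝔞] [Module K 𝔞] [FiniteDimensional K 𝔞]
    (e : 𝔞 →ₗ[K] Module.End K M)
    (hdeg : ∀ a : 𝔞, HasDeg gr 2 (e a))
    (hcomm : ∀ a b : 𝔞, Commute (e a) (e b))
    (hHL : ∃ a : 𝔞, HardLef gr (e a))
    (h : Module.End K M) (hop : IsGradingOp gr h)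
    (L : LieSubalgebra K (Module.End K M))
    (hL : L = llv gr h (fun x => ∃ a : 𝔞, x = e a))
    (hss : LieAlgebra.IsSemisimple K ↥L)
    (hJL : ConcJL gr L)
    {H : Type} [LieRing H] [LieAlgebra K H] [FiniteDimensional K H]
    (grH : ℤ → Submodule K H) (hgrH : DirectSum.IsInternal grH)
    (hbrH : ∀ i j : ℤ, ∀ x ∈ grH i, ∀ y ∈ grH j, ⁅x, y⁆ ∈ grH (i + j))
    (φ : ↥L →ₗ⁅K⁆ H)
    (hφdeg : ∀ k : ℤ, ∀ x : ↥L, HasDeg gr k ↑x → φ x ∈ grH k)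
    (hφ2 : ∀ x : ↥L, HasDeg gr 2 ↑x → φ x = 0 → x = 0) :
    Function.Injective φ := by
  clear hdeg hcomm hHL
  haveI : LieAlgebra.IsSemisimple K ↥L := hss
  -- degree of a bracket
  have hbr : ∀ {m n : ℤ} {x y : Module.End K M}, HasDeg gr m x → HasDeg gr n y →
      HasDeg gr (m + n) ⁅x, y⁆ := by
    intro m n x y hx hy k z hz
    have h1 : x (y z) ∈ gr (k + (m + n)) := by
      have := hx (k + n) (y z) (hy k z hz)
      rwa [show k + n + m = k + (m + n) by ring] at this
    have h2 : y (x z) ∈ gr (k + (m + n)) := by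
      have := hy (k + m) (x z) (hx k z hz)
      rwa [show k + m + n = k + (m + n) by ring] at this
    have hev : ⁅x, y⁆ z = x (y z) - y (x z) := by
      simp [Ring.lie_def, LinearMap.sub_apply, Module.End.mul_apply]
    rw [hev]
    exact Submodule.sub_mem _ h1 h2
  -- bracket with the grading operator
  have hcomh : ∀ {n : ℤ} {x : Module.End K M}, HasDeg gr n x →
      ⁅h, x⁆ = ((n : ℤ) : K) • x := by
    intro n x hx
    apply aux_ext hgr
    intro k z hz
    have e1 : h (x z) = (((k + n : ℤ) : K)) • (x z) := hop (k + n) _ (hx k z hz)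
    have e2 : x (h z) = ((k : ℤ) : K) • x z := by
      rw [hop k z hz, map_smul]
    have hev : ⁅h, x⁆ z = h (x z) - x (h z) := by
      simp [Ring.lie_def, LinearMap.sub_apply, Module.End.mul_apply]
    rw [hev, e1, e2, LinearMap.smul_apply, ← sub_smul]
    congr 1
    push_cast
    ring
  -- degree -4 elements of L vanish
  have hdegm4 : ∀ x ∈ L, HasDeg gr (-4) x → x = (0 : Module.End K M) := by
    intro x hxL hdx
    obtain ⟨u, v, w, hu, hv, hw, du, dv, dw, hxe⟩ := hJL x hxL
    apply aux_ext hgr (g := 0)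
    intro k z hz
    have h1 : x z ∈ gr (k + -4) := hdx k z hz
    have h2 : x z ∈ ⨆ (l) (_ : l ≠ k + -4), gr l := by
      have : x z = u z + v z + w z := by rw [hxe]; simp
      rw [this]
      refine Submodule.add_mem _ (Submodule.add_mem _ ?_ ?_) ?_
      · exact aux_mem_biSup (by omega) (du k z hz)
      · exact aux_mem_biSup (by omega) (dv k z hz)
      · exact aux_mem_biSup (by omega) (dw k z hz)
    simpa using aux_eq_zero hgr h1 h2
  -- generators lie in L
  have hmem : ∀ x ∈ llvGen gr h (fun x => ∃ a : 𝔞, x = e a), x ∈ L := by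
    rw [hL]
    exact fun x hx => LieSubalgebra.subset_lieSpan hx
  -- degree-0 elements of the kernel vanish
  have hker0 : ∀ v : ↥L, φ v = 0 → HasDeg gr 0 (v : Module.End K M) → v = 0 := by
    intro v hv hdv
    -- the centralizer of ↑v is a Lie subalgebra
    let S0 : Submodule K (Module.End K M) :=
      { carrier := {z | ⁅z, (v : Module.End K M)⁆ = 0}
        add_mem' := by
          intro a b ha hb
          simp only [Set.mem_setOf_eq] at *
          rw [add_lie, ha, hb, add_zero]
        zero_mem' := zero_lie _
        smul_mem' := by
          intro c a ha
          simp only [Set.mem_setOf_eq] at *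
          rw [smul_lie, ha, smul_zero] }
    let S : LieSubalgebra K (Module.End K M) :=
      { toSubmodule := S0
        lie_mem' := by
          intro a b ha hb
          simp only [S0, Set.mem_setOf_eq, Submodule.mem_mk, AddSubmonoid.mem_mk,
            AddSubsemigroup.mem_mk] at *
          rw [lie_lie, ha, hb, lie_zero, lie_zero, sub_zero] }
    have hscar : ∀ z : Module.End K M, z ∈ S ↔ ⁅z, (v : Module.End K M)⁆ = 0 := fun z => Iff.rfl
    have hLS : L ≤ S := by
      rw [hL]
      apply LieSubalgebra.lieSpan_le.mpr
      rintro g (rfl | ⟨e', hP, hHLe, hg⟩)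
      · -- the grading operator
        rw [SetLike.mem_coe, hscar, hcomh hdv]
        simp
      have he'L : e' ∈ L := hmem _ (Or.inr ⟨e', hP, hHLe, Or.inl rfl⟩)
      have hde' : HasDeg gr 2 e' := hHLe.1
      -- brackets of kernel elements of given degree, of degree 2, vanish
      have key2 : ∀ z : ↥L, φ z = 0 → HasDeg gr 0 (z : Module.End K M) →
          ⁅e', (z : Module.End K M)⁆ = 0 := by
        intro z hz hdz
        have hmemb : ⁅e', (z : Module.End K M)⁆ ∈ L := L.lie_mem he'L z.2
        have hdb : HasDeg gr 2 ⁅e', (z : Module.End K M)⁆ := by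
          have := hbr hde' hdz
          rwa [show (2 : ℤ) + 0 = 2 by ring] at this
        have hB : (⟨⁅e', (z : Module.End K M)⁆, hmemb⟩ : ↥L) = ⁅(⟨e', he'L⟩ : ↥L), z⁆ :=
          Subtype.ext rfl
        have hφB : φ (⟨⁅e', (z : Module.End K M)⁆, hmemb⟩ : ↥L) = 0 := by
          rw [hB, LieHom.map_lie, hz, lie_zero]
        have := hφ2 _ hdb hφB
        exact Subtype.ext_iff.mp this
      rcases hg with rfl | ⟨hdf, hef⟩
      · -- a hard Lefschetz operator e'
        rw [SetLike.mem_coe, hscar]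
        exact key2 v hv hdv
      · -- an operator f with ⁅e', f⁆ = h
        have hgL : g ∈ L := hmem _ (Or.inr ⟨e', hP, hHLe, Or.inr ⟨hdf, hef⟩⟩)
        rw [SetLike.mem_coe, hscar]
        set z : Module.End K M := ⁅g, (v : Module.End K M)⁆ with hzdef
        have hzL : z ∈ L := L.lie_mem hgL v.2
        have hdz : HasDeg gr (-2) z := by
          have := hbr hdf hdv
          rwa [show (-2 : ℤ) + 0 = -2 by ring] at this
        have hφz : φ (⟨z, hzL⟩ : ↥L) = 0 := by
          have : (⟨z, hzL⟩ : ↥L) = ⁅(⟨g, hgL⟩ : ↥L), v⁆ := Subtype.ext rfl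
          rw [this, LieHom.map_lie, hv, lie_zero]
        set z1 : Module.End K M := ⁅e', z⁆ with hz1def
        have hz1L : z1 ∈ L := L.lie_mem he'L hzL
        have hdz1 : HasDeg gr 0 z1 := by
          have := hbr hde' hdz
          rwa [show (2 : ℤ) + -2 = 0 by ring] at this
        have hφz1 : φ (⟨z1, hz1L⟩ : ↥L) = 0 := by
          have : (⟨z1, hz1L⟩ : ↥L) = ⁅(⟨e', he'L⟩ : ↥L), ⟨z, hzL⟩⁆ := Subtype.ext rfl
          rw [this, LieHom.map_lie, hφz, lie_zero]
        have hez1 : ⁅e', z1⁆ = 0 := key2 ⟨z1, hz1L⟩ hφz1 hdz1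
        have hfz : ⁅g, z⁆ = 0 := by
          apply hdegm4 _ (L.lie_mem hgL hzL)
          have := hbr hdf hdz
          rwa [show (-2 : ℤ) + -2 = -4 by ring] at this
        have hfz1 : ⁅g, z1⁆ = (2 : K) • z := by
          rw [hz1def, leibniz_lie, hfz, lie_zero, add_zero, ← lie_skew g e', hef,
            neg_lie, hcomh hdz]
          push_cast
          rw [← neg_smul]
          norm_num
        have hz1zero : z1 = 0 := by
          have h1 : ⁅e', ⁅g, z1⁆⁆ = 0 := by
            rw [leibniz_lie, hef, hez1, lie_zero, add_zero, hcomh hdz1]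
            simp
          rw [hfz1, lie_smul] at h1
          have h2 : (2 : K) • z1 = 0 := by rw [← hz1def] at h1; exact h1
          have := smul_eq_zero.mp h2
          rcases this with h' | h'
          · exact absurd h' two_ne_zero
          · exact h'
        have : (2 : K) • z = 0 := by rw [← hfz1, hz1zero, lie_zero]
        rcases smul_eq_zero.mp this with h' | h'
        · exact absurd h' two_ne_zero
        · exact h'
    -- v is central, and the center is trivial
    have hvcen : v ∈ LieAlgebra.center K ↥L := by
      rw [LieModule.mem_maxTrivSubmodule]
      intro z
      have hz : ⁅(z : Module.End K M), (v : Module.End K M)⁆ = 0 := hLS z.2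
      exact Subtype.ext (by rw [LieSubalgebra.coe_bracket]; exact hz)
    rw [LieAlgebra.center_eq_bot] at hvcen
    exact (LieSubmodule.mem_bot _).mp hvcen
  -- every element of the kernel has degree -2
  have hkey : ∀ x : ↥L, φ x = 0 → HasDeg gr (-2) (x : Module.End K M) := by
    intro x hx
    obtain ⟨u, v, w, hu, hv, hw, du, dv, dw, hxe⟩ := hJL (x : Module.End K M) x.2
    set U : ↥L := ⟨u, hu⟩
    set V : ↥L := ⟨v, hv⟩
    set W : ↥L := ⟨w, hw⟩
    have hsum : x = U + V + W := Subtype.ext (by simpa using hxe)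
    have hφsum : φ U + φ V + φ W = 0 := by
      rw [← map_add, ← map_add, ← hsum, hx]
    have mU : φ U ∈ grH (-2) := hφdeg (-2) U du
    have mV : φ V ∈ grH 0 := hφdeg 0 V dv
    have mW : φ W ∈ grH 2 := hφdeg 2 W dw
    have hφU : φ U = 0 := by
      have heq : φ U = -(φ V + φ W) := by
        rw [eq_neg_iff_add_eq_zero, ← add_assoc]; exact hφsum
      refine aux_eq_zero hgrH mU ?_
      rw [heq]
      exact Submodule.neg_mem _ (Submodule.add_mem _
        (aux_mem_biSup (by omega) mV) (aux_mem_biSup (by omega) mW))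
    have hφV : φ V = 0 := by
      have heq : φ V = -(φ W) := by
        rw [hφU, zero_add] at hφsum
        rw [eq_neg_iff_add_eq_zero]; exact hφsum
      refine aux_eq_zero hgrH mV ?_
      rw [heq]
      exact Submodule.neg_mem _ (aux_mem_biSup (by omega) mW)
    have hφW : φ W = 0 := by
      rw [hφU, hφV, zero_add, zero_add] at hφsum; exact hφsum
    have hW0 : W = 0 := hφ2 W dw hφW
    have hV0 : V = 0 := hker0 V hφV dv
    have hxu : (x : Module.End K M) = u := by
      have hv0 : v = 0 := Subtype.ext_iff.mp hV0
      have hw0 : w = 0 := Subtype.ext_iff.mp hW0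
      rw [hxe, hv0, hw0, add_zero, add_zero]
    intro k z hz
    rw [hxu]
    exact du k z hz
  -- the kernel is an abelian ideal, hence trivial
  have hab : IsLieAbelian ↥(φ.ker) := by
    constructor
    intro a b
    have ha : φ (a : ↥L) = 0 := (LieHom.mem_ker (f := φ)).mp a.2
    have hb : φ (b : ↥L) = 0 := (LieHom.mem_ker (f := φ)).mp b.2
    have hda := hkey _ ha
    have hdb := hkey _ hb
    have hd : HasDeg gr (-4) ⁅((a : ↥L) : Module.End K M), ((b : ↥L) : Module.End K M)⁆ := by
      have := hbr hda hdb
      rwa [show (-2 : ℤ) + -2 = -4 by ring] at this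
    have h0 : ⁅((a : ↥L) : Module.End K M), ((b : ↥L) : Module.End K M)⁆ = 0 :=
      hdegm4 _ (L.lie_mem (a : ↥L).2 (b : ↥L).2) hd
    have h1 : (⁅(a : ↥L), (b : ↥L)⁆ : ↥L) = 0 :=
      Subtype.ext (by rw [LieSubalgebra.coe_bracket]; exact h0)
    exact Subtype.ext h1
  have hkerbot : φ.ker = ⊥ :=
    (LieAlgebra.hasTrivialRadical_iff_no_abelian_ideals K ↥L).mp inferInstance φ.ker hab
  exact (LieHom.ker_eq_bot φ).mp hkerbot
end

section
/- Let K be a field of characteristic 0 and let 𝔤 be a simple Lie algebra over K with dim_K 𝔤 = 3 that contains a nonzero element e such that the adjoint map ad(e) : 𝔤 → 𝔤 is nilpotent. Then 𝔤 is isomorphic to sl₂(K). -/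
open LieAlgebra Module

lemma sl2_mem_iff {K : Type} [Field K] (M : Matrix (Fin 2) (Fin 2) K) :
    M ∈ LieAlgebra.SpecialLinear.sl (Fin 2) K ↔ Matrix.trace M = 0 := Iff.rfl

lemma sl2_iso_of_triple {K : Type} [Field K] {L : Type} [LieRing L] [LieAlgebra K L]
    (h e f : L)
    (hhe : ⁅h, e⁆ = (2:K) • e) (hhf : ⁅h, f⁆ = (-2:K) • f) (hef : ⁅e, f⁆ = h)
    (hinj : ∀ a b c : K, a • h + b • e + c • f = 0 → a = 0 ∧ b = 0 ∧ c = 0)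
    (hsurj : ∀ x : L, ∃ a b c : K, a • h + b • e + c • f = x) :
    Nonempty (L ≃ₗ⁅K⁆ ↥(LieAlgebra.SpecialLinear.sl (Fin 2) K)) := by
  have heh : ⁅e, h⁆ = (-2:K) • e := by rw [← lie_skew, hhe]; module
  have hfh : ⁅f, h⁆ = (2:K) • f := by rw [← lie_skew, hhf]; module
  have hfe : ⁅f, e⁆ = -h := by rw [← lie_skew, hef]
  have htr : ∀ M : ↥(LieAlgebra.SpecialLinear.sl (Fin 2) K),
      M.1 1 1 = - M.1 0 0 := by
    rintro ⟨M, hM⟩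
    have h2 : Matrix.trace M = 0 := hM
    rw [Matrix.trace_fin_two] at h2
    show M 1 1 = - M 0 0
    linear_combination h2
  let φ₀ : ↥(LieAlgebra.SpecialLinear.sl (Fin 2) K) →ₗ[K] L :=
    { toFun := fun M => M.1 0 0 • h + M.1 0 1 • e + M.1 1 0 • f
      map_add' := by
        intro M N
        have hc : ((M + N) : ↥(LieAlgebra.SpecialLinear.sl (Fin 2) K)).1 = M.1 + N.1 := rfl
        simp only [hc, Matrix.add_apply]
        module
      map_smul' := by
        intro c M
        have hc : ((c • M) : ↥(LieAlgebra.SpecialLinear.sl (Fin 2) K)).1 = c • M.1 := rfl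
        simp only [hc, Matrix.smul_apply, smul_eq_mul, RingHom.id_apply]
        module }
  let φ : ↥(LieAlgebra.SpecialLinear.sl (Fin 2) K) →ₗ⁅K⁆ L :=
    { φ₀ with
      map_lie' := by
        intro M N
        show (⁅M,N⁆.1 0 0) • h + (⁅M,N⁆.1 0 1) • e + (⁅M,N⁆.1 1 0) • f =
          ⁅M.1 0 0 • h + M.1 0 1 • e + M.1 1 0 • f,
            N.1 0 0 • h + N.1 0 1 • e + N.1 1 0 • f⁆
        have hb : ⁅M, N⁆.1 = M.1 * N.1 - N.1 * M.1 :=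
          LieAlgebra.SpecialLinear.sl_bracket (Fin 2) K M N
        rw [hb]
        simp only [Matrix.sub_apply, Matrix.mul_apply, Fin.sum_univ_two]
        simp only [lie_add, add_lie, lie_smul, smul_lie, lie_self, smul_zero,
          hhe, hhf, hef, heh, hfh, hfe]
        rw [htr M, htr N]
        match_scalars <;> ring }
  have hbij : Function.Bijective φ := by
    constructor
    · intro M N hMN
      have hz : φ₀ (M - N) = 0 := by rw [map_sub]; exact sub_eq_zero.mpr hMN
      have hz' : (M - N).1 0 0 • h + (M - N).1 0 1 • e + (M - N).1 1 0 • f = 0 := hz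
      obtain ⟨h1, h2, h3⟩ := hinj _ _ _ hz'
      have h4 : (M - N).1 1 1 = 0 := by rw [htr (M - N), h1, neg_zero]
      have hMN0 : (M - N).1 = 0 := by
        ext i j
        fin_cases i <;> fin_cases j <;> simpa
      exact sub_eq_zero.mp (Subtype.ext hMN0)
    · intro x
      obtain ⟨a, b, c, hx⟩ := hsurj x
      refine ⟨⟨!![a, b; c, -a], ?_⟩, ?_⟩
      · rw [sl2_mem_iff, Matrix.trace_fin_two]
        simp
      · show _ • h + _ • e + _ • f = x
        simpa using hx
  exact ⟨(LieEquiv.ofBijective φ hbij).symm⟩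

/-- A simple Lie algebra of dimension 3 over a field of characteristic 0 containing a
nonzero ad-nilpotent element is isomorphic to `sl₂`. -/
theorem stmt_11 {K : Type} [Field K] [CharZero K]
    {L : Type} [LieRing L] [LieAlgebra K L] [LieAlgebra.IsSimple K L]
    [Module.Finite K L] (hdim : Module.finrank K L = 3)
    (e : L) (he : e ≠ 0) (hnil : IsNilpotent ((LieAlgebra.ad K L e : Module.End K L))) :
    Nonempty (L ≃ₗ⁅K⁆ ↥(LieAlgebra.SpecialLinear.sl (Fin 2) K)) := by
  set A : Module.End K L := LieAlgebra.ad K L e with hA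
  have hAapp : ∀ x : L, A x = ⁅e, x⁆ := fun x => rfl
  have hAe : A e = 0 := by rw [hAapp, lie_self]
  have hA3 : A ^ 3 = 0 := by
    have h1 : A.charpoly = Polynomial.X ^ (Module.finrank K L) :=
      hnil.charpoly_eq_X_pow_finrank
    have h2 := A.aeval_self_charpoly
    rw [h1, hdim] at h2
    simpa using h2
  have hA3' : ∀ x : L, A (A (A x)) = 0 := by
    intro x
    have : (A ^ 3) x = 0 := by rw [hA3]; rfl
    simpa [pow_succ, Module.End.mul_apply] using this
  by_cases hA2 : ∀ x : L, A (A x) = 0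
  · -- degenerate case : contradiction with simplicity
    exfalso
    by_cases him : ∀ y : L, A y ∈ Submodule.span K {e}
    · -- K∙e is an ideal
      let I : LieIdeal K L :=
        { Submodule.span K {e} with
          lie_mem := by
            intro x m hm
            obtain ⟨c, hc⟩ := Submodule.mem_span_singleton.mp hm
            have : ⁅x, m⁆ = -(c • (A x)) := by
              rw [← hc, lie_smul, hAapp, ← lie_skew, smul_neg]
            rw [this]
            exact Submodule.neg_mem _ (Submodule.smul_mem _ _ (him x)) }
      rcases LieAlgebra.IsSimple.eq_bot_or_eq_top I with hbot | htop
      · have heI : e ∈ I := Submodule.mem_span_singleton_self e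
        rw [hbot] at heI
        exact he (by simpa using heI)
      · have hsp : Submodule.span K {e} = ⊤ := by
          have := congrArg (fun J : LieIdeal K L => (J : Submodule K L)) htop
          rw [eq_top_iff]
          intro x _
          have hx : x ∈ (⊤ : LieIdeal K L) := LieSubmodule.mem_top x
          rw [← htop] at hx
          exact hx
        have h1 : finrank K (Submodule.span K ({e} : Set L)) = 1 :=
          finrank_span_singleton he
        rw [hsp, finrank_top, hdim] at h1
        norm_num at h1
    · push_neg at him
      obtain ⟨w, hw⟩ := him
      set z : L := A w with hz
      have hz0 : z ≠ 0 := fun h0 => hw (h0 ▸ Submodule.zero_mem _)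
      have hAz : A z = 0 := hA2 w
      have hrk : finrank K (LinearMap.range A) + finrank K (LinearMap.ker A) = 3 := by
        rw [LinearMap.finrank_range_add_finrank_ker, hdim]
      have hle : LinearMap.range A ≤ LinearMap.ker A := by
        rintro y ⟨x, rfl⟩
        exact hA2 x
      have hmono := Submodule.finrank_mono hle
      have hrpos : 0 < finrank K (LinearMap.range A) := by
        rw [finrank_pos_iff]
        exact ⟨⟨⟨z, ⟨w, rfl⟩⟩, 0, by simp [Subtype.ext_iff, hz0]⟩⟩
      have hr1 : finrank K (LinearMap.range A) = 1 := by omega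
      have hk2 : finrank K (LinearMap.ker A) = 2 := by omega
      have hrange : LinearMap.range A = Submodule.span K {z} := by
        symm
        apply Submodule.eq_of_le_of_finrank_le
        · rw [Submodule.span_le, Set.singleton_subset_iff]
          exact ⟨w, rfl⟩
        · rw [hr1, finrank_span_singleton hz0]
      -- z, e linearly independent
      have hli : LinearIndependent K ![z, e] := by
        rw [linearIndependent_fin2]
        refine ⟨by simpa using he, fun a ha => hw ?_⟩
        simp only [Matrix.cons_val_one, Matrix.head_cons, Matrix.cons_val_zero] at ha
        rw [← ha]
        exact Submodule.smul_mem _ _ (Submodule.mem_span_singleton_self e)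
      have hker : LinearMap.ker A = Submodule.span K (Set.range ![z, e]) := by
        symm
        apply Submodule.eq_of_le_of_finrank_le
        · rw [Submodule.span_le, Set.range_subset_iff]
          intro i
          fin_cases i
          · exact hAz
          · exact hAe
        · rw [hk2, finrank_span_eq_card hli, Fintype.card_fin]
      let I : LieIdeal K L :=
        { (LinearMap.ker A : Submodule K L) with
          lie_mem := by
            intro y m hm
            have hm' : m ∈ LinearMap.ker A := hm
            obtain ⟨c, hc⟩ := Submodule.mem_span_range_iff_exists_fun K |>.mp (hker ▸ hm')
            rw [Fin.sum_univ_two] at hc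
            simp only [Matrix.cons_val_zero, Matrix.cons_val_one, Matrix.head_cons] at hc
            obtain ⟨cy, hcy⟩ := Submodule.mem_span_singleton.mp (hrange ▸ LinearMap.mem_range_self A y)
            show ⁅y, m⁆ ∈ LinearMap.ker A
            rw [LinearMap.mem_ker, hAapp]
            have hlz : ⁅z, m⁆ = 0 := by
              rw [← hc, lie_add, lie_smul, lie_smul, lie_self,
                show ⁅z, e⁆ = -(A z) by rw [hAapp, ← lie_skew], hAz]
              simp
            calc ⁅e, ⁅y, m⁆⁆ = ⁅⁅e, y⁆, m⁆ + ⁅y, ⁅e, m⁆⁆ := leibniz_lie e y m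
              _ = ⁅A y, m⁆ := by rw [show ⁅e, m⁆ = 0 from hm', lie_zero, add_zero, hAapp]
              _ = cy • ⁅z, m⁆ := by rw [← hcy, smul_lie]
              _ = 0 := by rw [hlz, smul_zero] }
      rcases LieAlgebra.IsSimple.eq_bot_or_eq_top I with hbot | htop
      · have heI : e ∈ I := hAe
        rw [hbot] at heI
        exact he (by simpa using heI)
      · have hwI : w ∈ I := htop ▸ LieSubmodule.mem_top w
        exact hz0 (hwI : A w = 0)
  · -- main case : A² ≠ 0
    push_neg at hA2
    obtain ⟨v₀, hv₀⟩ := hA2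
    have hAv0 : A v₀ ≠ 0 := fun h0 => hv₀ (by rw [h0, map_zero])
    -- A v₀ and A (A v₀) are independent, so rank A ≥ 2, so ker A = K∙e
    have hli2 : LinearIndependent K ![A (A v₀), A v₀] := by
      rw [linearIndependent_fin2]
      constructor
      · simpa using hAv0
      · intro a ha
        simp only [Matrix.cons_val_one, Matrix.head_cons, Matrix.cons_val_zero] at ha
        have h1 := congrArg A ha
        rw [map_smul, hA3' v₀] at h1
        rcases smul_eq_zero.mp h1 with h0 | h0
        · rw [h0, zero_smul] at ha
          exact hv₀ ha.symm
        · exact hv₀ h0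
    have hsle : Submodule.span K (Set.range ![A (A v₀), A v₀]) ≤ LinearMap.range A := by
      rw [Submodule.span_le, Set.range_subset_iff]
      intro i
      fin_cases i
      · exact ⟨A v₀, rfl⟩
      · exact ⟨v₀, rfl⟩
    have hrk : finrank K (LinearMap.range A) + finrank K (LinearMap.ker A) = 3 := by
      rw [LinearMap.finrank_range_add_finrank_ker, hdim]
    have hr2 : 2 ≤ finrank K (LinearMap.range A) := by
      have := Submodule.finrank_mono hsle
      rwa [finrank_span_eq_card hli2, Fintype.card_fin] at this
    have hk1 : finrank K (LinearMap.ker A) ≤ 1 := by omega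
    have hker : LinearMap.ker A = Submodule.span K {e} := by
      symm
      apply Submodule.eq_of_le_of_finrank_le
      · rw [Submodule.span_le, Set.singleton_subset_iff]; exact hAe
      · rwa [finrank_span_singleton he]
    -- scale v₀ so that A (A v) = e
    have hAAv₀ : A (A v₀) ∈ LinearMap.ker A := hA3' v₀
    rw [hker] at hAAv₀
    obtain ⟨c, hc⟩ := Submodule.mem_span_singleton.mp hAAv₀
    have hc0 : c ≠ 0 := fun h0 => hv₀ (by rw [← hc, h0, zero_smul])
    obtain ⟨v, hAAv⟩ : ∃ v : L, A (A v) = e :=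
      ⟨c⁻¹ • v₀, by rw [map_smul, map_smul, ← hc, smul_smul, inv_mul_cancel₀ hc0, one_smul]⟩
    obtain ⟨m, hm⟩ : ∃ m : L, m = A v := ⟨_, rfl⟩
    have hev : ⁅e, v⁆ = m := by rw [hm, hAapp]
    have hem : ⁅e, m⁆ = e := by rw [← hAapp, hm, hAAv]
    -- coefficients lemma
    have hcoef : ∀ a b c' : K, a • e + b • m + c' • v = 0 → a = 0 ∧ b = 0 ∧ c' = 0 := by
      intro a b c' habc
      have hAm : A m = e := by rw [hm, hAAv]
      have hAv : A v = m := hm.symm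
      have h1 : b • e + c' • m = 0 := by
        have := congrArg A habc
        simpa [map_add, map_smul, hAe, hAm, hAv] using this
      have h2 : c' • e = 0 := by
        have := congrArg A h1
        simpa [map_add, map_smul, hAe, hAm] using this
      have hc' : c' = 0 := by
        rcases smul_eq_zero.mp h2 with h | h
        · exact h
        · exact absurd h he
      have hb : b = 0 := by
        rw [hc', zero_smul, add_zero] at h1
        rcases smul_eq_zero.mp h1 with h | h
        · exact h
        · exact absurd h he
      have ha : a = 0 := by
        rw [hc', hb, zero_smul, zero_smul, add_zero, add_zero] at habc
        rcases smul_eq_zero.mp habc with h | h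
        · exact h
        · exact absurd h he
      exact ⟨ha, hb, hc'⟩
    have hli3 : LinearIndependent K ![e, m, v] := by
      rw [Fintype.linearIndependent_iff]
      intro g hg
      rw [Fin.sum_univ_three] at hg
      simp only [Matrix.cons_val_zero, Matrix.cons_val_one, Matrix.head_cons,
        Matrix.cons_val_two, Matrix.tail_cons] at hg
      obtain ⟨h0, h1, h2⟩ := hcoef _ _ _ hg
      intro i
      fin_cases i <;> assumption
    have hspan : Submodule.span K (Set.range ![e, m, v]) = ⊤ :=
      hli3.span_eq_top_of_card_eq_finrank (by rw [Fintype.card_fin, hdim])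
    -- coordinates of ⁅m, v⁆
    have hmvmem : ⁅m, v⁆ ∈ Submodule.span K (Set.range ![e, m, v]) := by
      rw [hspan]; trivial
    obtain ⟨g, hg⟩ := Submodule.mem_span_range_iff_exists_fun K |>.mp hmvmem
    rw [Fin.sum_univ_three] at hg
    simp only [Matrix.cons_val_zero, Matrix.cons_val_one, Matrix.head_cons,
      Matrix.cons_val_two, Matrix.tail_cons] at hg
    obtain ⟨α, hα⟩ : ∃ α : K, α = g 0 := ⟨_, rfl⟩
    obtain ⟨β, hβ'⟩ : ∃ β : K, β = g 1 := ⟨_, rfl⟩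
    obtain ⟨γ, hγ'⟩ : ∃ γ : K, γ = g 2 := ⟨_, rfl⟩
    rw [← hα, ← hβ', ← hγ'] at hg
    -- Jacobi identity forces β = 0 and γ = 1
    have hJ : ⁅e, ⁅m, v⁆⁆ = m := by
      rw [leibniz_lie, hem, hev, lie_self, add_zero]
    have hJ2 : ⁅e, ⁅m, v⁆⁆ = β • e + γ • m := by
      rw [← hg, lie_add, lie_add, lie_smul, lie_smul, lie_smul, lie_self,
        hem, hev, smul_zero, zero_add]
    have hJ' : β • e + γ • m = m := hJ2.symm.trans hJ
    have hβγ : β = 0 ∧ γ - 1 = 0 := by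
      have h0 : β • e + (γ - 1) • m + (0:K) • v = 0 := by
        linear_combination (norm := module) hJ'
      obtain ⟨h1, h2, _⟩ := hcoef _ _ _ h0
      exact ⟨h1, h2⟩
    have hβ : β = 0 := hβγ.1
    have hγ : γ = 1 := by linear_combination hβγ.2
    rw [hβ, hγ, zero_smul, one_smul, add_zero] at hg
    -- hg : α • e + v = ⁅m, v⁆
    -- define the sl₂-triple
    obtain ⟨h, hh⟩ : ∃ h : L, h = (-2 : K) • m := ⟨_, rfl⟩
    obtain ⟨f, hf⟩ : ∃ f : L, f = (-2 : K) • v + (-α) • e := ⟨_, rfl⟩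
    have hme : ⁅m, e⁆ = -e := by rw [← lie_skew, hem]
    have hhe : ⁅h, e⁆ = (2:K) • e := by
      rw [hh, smul_lie, hme]
      module
    have hef : ⁅e, f⁆ = h := by
      rw [hf, hh, lie_add, lie_smul, lie_smul, lie_self, hev, smul_zero, add_zero]
    have hmf : ⁅m, f⁆ = f := by
      rw [hf, lie_add, lie_smul, lie_smul, ← hg, hme]
      module
    have hhf : ⁅h, f⁆ = (-2:K) • f := by
      rw [hh, smul_lie, hmf]
    -- injectivity and surjectivity data
    have hinj : ∀ a b c' : K, a • h + b • e + c' • f = 0 → a = 0 ∧ b = 0 ∧ c' = 0 := by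
      intro a b c' habc
      have hexp : (b + c' * (-α)) • e + (-2 * a) • m + (-2 * c') • v = 0 := by
        rw [← habc, hh, hf]
        match_scalars <;> ring
      obtain ⟨h1, h2, h3⟩ := hcoef _ _ _ hexp
      have h2' : (2:K) ≠ 0 := two_ne_zero
      have ha : a = 0 := by
        have : (-2 : K) * a = 0 := h2
        rcases mul_eq_zero.mp this with h | h
        · norm_num at h
        · exact h
      have hc' : c' = 0 := by
        have : (-2 : K) * c' = 0 := h3
        rcases mul_eq_zero.mp this with h | h
        · norm_num at h
        · exact h
      refine ⟨ha, ?_, hc'⟩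
      rw [hc'] at h1
      simpa using h1
    have hsurj : ∀ x : L, ∃ a b c' : K, a • h + b • e + c' • f = x := by
      intro x
      have hx : x ∈ Submodule.span K (Set.range ![e, m, v]) := by rw [hspan]; trivial
      obtain ⟨gx, hgx⟩ := Submodule.mem_span_range_iff_exists_fun K |>.mp hx
      rw [Fin.sum_univ_three] at hgx
      simp only [Matrix.cons_val_zero, Matrix.cons_val_one, Matrix.head_cons,
        Matrix.cons_val_two, Matrix.tail_cons] at hgx
      refine ⟨-(gx 1)/2, gx 0 + (-(gx 2)/2) * α, -(gx 2)/2, ?_⟩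
      rw [← hgx, hh, hf]
      match_scalars <;> ring
    exact sl2_iso_of_triple h e f hhe hhf hef hinj hsurj
end

section
/- Let K be a field of characteristic 0, let V be a K-vector space with 2 ≤ dim V < ∞ equipped with a nondegenerate symmetric bilinear form b, and let U = Kα ⊕ Kβ be the hyperbolic plane with symmetric bilinear form determined by B(α, α) = B(β, β) = 0 and B(α, β) = 1. Equip W = U ⊕ V with the orthogonal direct sum form B ⊥ b, and let 𝔰𝔬(W) be the Lie algebra of endomorphisms of W that are skew-adjoint with respect to this form. Let h ∈ 𝔰𝔬(W) be the endomorphism with h(α) = −2α, h(β) = 2β and h|_V = 0. Then 𝔰𝔬(W) is generated as a Lie algebra by the set {x ∈ 𝔰𝔬(W) : [h, x] = 2x} ∪ {x ∈ 𝔰𝔬(W) : [h, x] = −2x}. -/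
open LinearMap

/-- The symmetric bilinear form on `W = U ⊕ V`, where `U = Kα ⊕ Kβ` (modelled as `K × K`,
with `α = (1,0)`, `β = (0,1)`) is the hyperbolic plane (`B(α,α) = B(β,β) = 0`,
`B(α,β) = 1`) and the sum is orthogonal. -/
noncomputable def hypPlaneForm (K V : Type) [Field K] [AddCommGroup V] [Module K V]
    (b : LinearMap.BilinForm K V) : LinearMap.BilinForm K ((K × K) × V) :=
  LinearMap.mk₂ K
    (fun x y => x.1.1 * y.1.2 + x.1.2 * y.1.1 + b x.2 y.2)
    (by
      intro m m' n
      simp only [Prod.fst_add, Prod.snd_add, map_add, LinearMap.add_apply]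
      ring)
    (by
      intro c m n
      simp only [Prod.smul_fst, Prod.smul_snd, map_smul, LinearMap.smul_apply,
        smul_eq_mul]
      ring)
    (by
      intro m n n'
      simp only [Prod.fst_add, Prod.snd_add, map_add, LinearMap.add_apply]
      ring)
    (by
      intro c m n
      simp only [Prod.smul_fst, Prod.smul_snd, map_smul, LinearMap.smul_apply,
        smul_eq_mul]
      ring)

/-- The grading operator `h` on `W = U ⊕ V`: `h(α) = -2α`, `h(β) = 2β`, `h|_V = 0`. -/
noncomputable def hOp (K V : Type) [Field K] [AddCommGroup V] [Module K V] :
    Module.End K ((K × K) × V) :=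
  LinearMap.prod
    ((((-2 : K) • LinearMap.fst K K K).prod ((2 : K) • LinearMap.snd K K K)) ∘ₗ
      LinearMap.fst K (K × K) V)
    0

attribute [local instance 100] LieRing.ofAssociativeRing

section Aux

variable {K V : Type} [Field K] [AddCommGroup V] [Module K V]

@[simp] lemma hypPlaneForm_apply (b : LinearMap.BilinForm K V) (x y : (K × K) × V) :
    hypPlaneForm K V b x y = x.1.1 * y.1.2 + x.1.2 * y.1.1 + b x.2 y.2 := rfl

@[simp] lemma hOp_apply (x : (K × K) × V) :
    hOp K V x = ((-2 * x.1.1, 2 * x.1.2), 0) := by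
  simp [hOp, smul_eq_mul]

/-- degree 2 generator -/
noncomputable def Eop (b : LinearMap.BilinForm K V) (v : V) : Module.End K ((K × K) × V) :=
  LinearMap.prod
    (LinearMap.prod (0 : (K × K) × V →ₗ[K] K) (-(b v ∘ₗ LinearMap.snd K (K × K) V)))
    ((LinearMap.fst K K K ∘ₗ LinearMap.fst K (K × K) V).smulRight v)

@[simp] lemma Eop_apply (b : LinearMap.BilinForm K V) (v : V) (x : (K × K) × V) :
    Eop b v x = ((0, -(b v x.2)), x.1.1 • v) := rfl

/-- degree -2 generator -/
noncomputable def Fop (b : LinearMap.BilinForm K V) (w : V) : Module.End K ((K × K) × V) :=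
  LinearMap.prod
    (LinearMap.prod (-(b w ∘ₗ LinearMap.snd K (K × K) V)) (0 : (K × K) × V →ₗ[K] K))
    ((LinearMap.snd K K K ∘ₗ LinearMap.fst K (K × K) V).smulRight w)

@[simp] lemma Fop_apply (b : LinearMap.BilinForm K V) (w : V) (x : (K × K) × V) :
    Fop b w x = ((-(b w x.2), 0), x.1.2 • w) := rfl

/-- the semisimple degree-0 part acting only on the plane -/
noncomputable def Dop (K V : Type) [Field K] [AddCommGroup V] [Module K V] :
    Module.End K ((K × K) × V) :=
  LinearMap.prod
    (LinearMap.prod (LinearMap.fst K K K ∘ₗ LinearMap.fst K (K × K) V)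
      (-(LinearMap.snd K K K ∘ₗ LinearMap.fst K (K × K) V)))
    0

@[simp] lemma Dop_apply (x : (K × K) × V) : Dop K V x = ((x.1.1, -x.1.2), 0) := rfl

/-- degree-0 part acting only on `V` -/
noncomputable def Mop (K : Type) {V : Type} [Field K] [AddCommGroup V] [Module K V]
    (T : Module.End K V) : Module.End K ((K × K) × V) :=
  LinearMap.prod (0 : (K × K) × V →ₗ[K] K × K) (T ∘ₗ LinearMap.snd K (K × K) V)

@[simp] lemma Mop_apply (T : Module.End K V) (x : (K × K) × V) :
    Mop K T x = ((0, 0), T x.2) := rfl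

lemma EF_bracket (b : LinearMap.BilinForm K V) (v w : V) (x : (K × K) × V) :
    ⁅Eop b v, Fop b w⁆ x
      = ((x.1.1 * b w v, -(x.1.2 * b v w)), b v x.2 • w - b w x.2 • v) := by
  simp only [Ring.lie_def, LinearMap.sub_apply, Module.End.mul_apply, Eop_apply,
    Fop_apply, map_smul, LinearMap.smul_apply, smul_eq_mul, map_neg, mul_neg]
  rw [Prod.ext_iff, Prod.ext_iff]
  refine ⟨⟨by simp, by simp⟩, by simp; abel⟩


end Aux

/-- `so(U ⊕ V)` (for `dim V ≥ 2`, `V` nondegenerate, `U` the hyperbolic plane) is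
generated as a Lie algebra by its parts of degree `2` and `-2` (the eigenspaces of
`ad h` with eigenvalues `±2`). -/
theorem stmt_19 {K : Type} [Field K] [CharZero K]
    {V : Type} [AddCommGroup V] [Module K V] [FiniteDimensional K V]
    (b : LinearMap.BilinForm K V)
    (hsymm : ∀ v w, b v w = b w v)
    (hnd : ∀ v, (∀ w, b v w = 0) → v = 0)
    (hdim : 2 ≤ Module.finrank K V) :
    ∀ x : Module.End K ((K × K) × V),
      (∀ v w, hypPlaneForm K V b (x v) w + hypPlaneForm K V b v (x w) = 0) →
      x ∈ LieSubalgebra.lieSpan K (Module.End K ((K × K) × V))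
        {y | (∀ v w, hypPlaneForm K V b (y v) w + hypPlaneForm K V b v (y w) = 0) ∧
          (⁅hOp K V, y⁆ = (2 : K) • y ∨ ⁅hOp K V, y⁆ = (-2 : K) • y)} := by
  intro x hx
  set SP := LieSubalgebra.lieSpan K (Module.End K ((K × K) × V))
      {y | (∀ v w, hypPlaneForm K V b (y v) w + hypPlaneForm K V b v (y w) = 0) ∧
        (⁅hOp K V, y⁆ = (2 : K) • y ∨ ⁅hOp K V, y⁆ = (-2 : K) • y)} with hSP
  have hB : b.Nondegenerate := ⟨hnd, fun y h => hnd y (fun w => by rw [hsymm]; exact h w)⟩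
  -- membership of the generators
  have hEmem : ∀ v : V, Eop b v ∈ SP := by
    intro v
    apply LieSubalgebra.subset_lieSpan
    refine ⟨fun p q => ?_, Or.inl ?_⟩
    · simp only [hypPlaneForm_apply, Eop_apply, map_smul, LinearMap.smul_apply, smul_eq_mul]
      rw [hsymm p.2 v]
      ring
    · apply LinearMap.ext
      intro p
      simp only [Ring.lie_def, LinearMap.sub_apply, Module.End.mul_apply, Eop_apply, hOp_apply, LinearMap.smul_apply, map_zero,
        Prod.smul_mk, smul_eq_mul, Prod.mk.injEq]
      rw [Prod.mk_sub_mk, Prod.mk_sub_mk, Prod.mk.injEq, Prod.mk.injEq]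
      refine ⟨⟨by ring, by ring⟩, by module⟩
  have hFmem : ∀ w : V, Fop b w ∈ SP := by
    intro w
    apply LieSubalgebra.subset_lieSpan
    refine ⟨fun p q => ?_, Or.inr ?_⟩
    · simp only [hypPlaneForm_apply, Fop_apply, map_smul, LinearMap.smul_apply, smul_eq_mul]
      rw [hsymm p.2 w]
      ring
    · apply LinearMap.ext
      intro p
      simp only [Ring.lie_def, LinearMap.sub_apply, Module.End.mul_apply, Fop_apply, hOp_apply, LinearMap.smul_apply, map_zero,
        Prod.smul_mk, smul_eq_mul, Prod.mk.injEq]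
      rw [Prod.mk_sub_mk, Prod.mk_sub_mk, Prod.mk.injEq, Prod.mk.injEq]
      refine ⟨⟨by ring, by ring⟩, by module⟩
  have hGmem : ∀ v w : V, ⁅Eop b v, Fop b w⁆ ∈ SP :=
    fun v w => SP.lie_mem (hEmem v) (hFmem w)
  -- an anisotropic vector exists
  obtain ⟨v0, hv0⟩ : ∃ v : V, b v v ≠ 0 := by
    by_contra hcon
    push_neg at hcon
    have hall : ∀ v w : V, b v w = 0 := by
      intro v w
      have h1 := hcon (v + w)
      simp only [map_add, LinearMap.add_apply, hcon v, hcon w, zero_add, add_zero] at h1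
      rw [hsymm w v] at h1
      exact add_self_eq_zero.mp h1
    have : ∀ v : V, v = 0 := fun v => hnd v (hall v)
    have : Module.finrank K V = 0 := by
      have : Subsingleton V := ⟨fun a b₂ => by rw [this a, this b₂]⟩
      exact Module.finrank_zero_of_subsingleton
    omega
  have hDmem : Dop K V ∈ SP := by
    have hD : Dop K V = (b v0 v0)⁻¹ • ⁅Eop b v0, Fop b v0⁆ := by
      apply LinearMap.ext
      intro p
      rw [LinearMap.smul_apply, EF_bracket]
      simp only [Dop_apply, sub_self, Prod.smul_mk, smul_eq_mul, smul_zero]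
      rw [Prod.mk.injEq, Prod.mk.injEq]
      refine ⟨⟨?_, ?_⟩, rfl⟩ <;> field_simp
    rw [hD]
    exact SP.smul_mem _ (hGmem v0 v0)
  -- dual bases
  classical
  set n := Module.finrank K V with hn
  set bb : Module.Basis (Fin n) K V := Module.finBasis K V with hbb
  set d : Module.Basis (Fin n) K V := b.dualBasis hB bb with hd
  have key1 : ∀ u : V, ∑ i, b (d i) u • bb i = u := by
    intro u
    have h1 : ∀ i, b (d i) u = bb.repr u i := by
      intro i
      conv_lhs => rw [← bb.sum_repr u]
      rw [map_sum]
      rw [Finset.sum_eq_single i]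
      · rw [map_smul, smul_eq_mul, LinearMap.BilinForm.apply_dualBasis_left, if_pos rfl,
          mul_one]
      · intro j _ hj
        rw [map_smul, smul_eq_mul, LinearMap.BilinForm.apply_dualBasis_left, if_neg hj,
          mul_zero]
      · intro hi
        exact absurd (Finset.mem_univ i) hi
    simp_rw [h1]
    exact bb.sum_repr u
  have key2 : ∀ u : V, ∑ i, b (bb i) u • d i = u := by
    intro u
    have h1 : ∀ i, b (bb i) u = d.repr u i := by
      intro i
      rw [hsymm, hd, LinearMap.BilinForm.dualBasis_repr_apply]
    simp_rw [h1]
    exact d.sum_repr u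
  -- the degree-0 V-part generators
  have hMmem : ∀ T : Module.End K V, (∀ u u', b (T u) u' + b u (T u') = 0) →
      Mop K T ∈ SP := by
    intro T hT
    have hskw : ∀ u u', b (T u) u' = -(b u (T u')) := by
      intro u u'
      exact eq_neg_of_add_eq_zero_left (hT u u')
    set c : K := ∑ i, b (T (bb i)) (d i) with hc
    have hM : Mop K T = (2 : K)⁻¹ •
        ((∑ i, ⁅Eop b (d i), Fop b (T (bb i))⁆) - c • Dop K V) := by
      apply LinearMap.ext
      intro p
      rw [LinearMap.smul_apply, LinearMap.sub_apply, LinearMap.sum_apply]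
      simp_rw [EF_bracket]
      rw [LinearMap.smul_apply]
      simp only [Mop_apply, Dop_apply, Prod.smul_mk, smul_eq_mul, smul_zero]
      have hsum1 : (∑ i, (((p.1.1 * b (T (bb i)) (d i), -(p.1.2 * b (d i) (T (bb i)))),
          b (d i) p.2 • T (bb i) - b (T (bb i)) p.2 • d i) : (K × K) × V))
          = ((p.1.1 * c, -(p.1.2 * c)), (2 : K) • T p.2) := by
        rw [Prod.ext_iff, Prod.ext_iff]
        refine ⟨⟨?_, ?_⟩, ?_⟩
        · rw [Prod.fst_sum, Prod.fst_sum]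
          simp only
          rw [← Finset.mul_sum, hc]
        · rw [Prod.fst_sum, Prod.snd_sum]
          simp only
          simp_rw [fun i => hsymm (d i) (T (bb i))]
          rw [Finset.sum_neg_distrib, ← Finset.mul_sum, hc]
        · rw [Prod.snd_sum]
          simp only
          rw [Finset.sum_sub_distrib]
          have e1 : ∑ i, b (d i) p.2 • T (bb i) = T p.2 := by
            have h2 := congrArg T (key1 p.2)
            rw [map_sum] at h2
            simpa [map_smul] using h2
          have e2 : ∑ i, b (T (bb i)) p.2 • d i = -(T p.2) := by
            have : ∀ i, b (T (bb i)) p.2 • d i = -(b (bb i) (T p.2) • d i) := by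
              intro i
              rw [hskw, neg_smul]
            simp_rw [this]
            rw [Finset.sum_neg_distrib, key2]
          rw [e1, e2, sub_neg_eq_add, two_smul]
      rw [hsum1]
      rw [Prod.ext_iff, Prod.ext_iff]
      simp only [Prod.smul_mk, Prod.mk_sub_mk, smul_eq_mul]
      refine ⟨⟨by ring, by ring⟩, ?_⟩
      rw [sub_zero, smul_smul, inv_mul_cancel₀ (two_ne_zero), one_smul]
    rw [hM]
    exact SP.smul_mem _ (sub_mem (sum_mem fun i _ => hGmem (d i) (T (bb i)))
      (SP.smul_mem c hDmem))
  -- components of x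
  set a : K := (x ((1, 0), 0)).1.1 with ha
  set v₁ : V := (x ((1, 0), 0)).2 with hv₁
  set v₂ : V := (x ((0, 1), 0)).2 with hv₂
  set T : Module.End K V :=
    LinearMap.snd K (K × K) V ∘ₗ x ∘ₗ LinearMap.inr K (K × K) V with hTdef
  have hTapp : ∀ u : V, T u = (x ((0, 0), u)).2 := fun u => rfl
  have h12 : (x ((1, 0), 0)).1.2 = 0 := by
    have h := hx ((1, 0), 0) ((1, 0), 0)
    simp only [hypPlaneForm_apply, map_zero, LinearMap.zero_apply, mul_zero, mul_one,
      zero_mul, one_mul, add_zero, zero_add] at h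
    exact add_self_eq_zero.mp h
  have h21 : (x ((0, 1), 0)).1.1 = 0 := by
    have h := hx ((0, 1), 0) ((0, 1), 0)
    simp only [hypPlaneForm_apply, map_zero, LinearMap.zero_apply, mul_zero, mul_one,
      zero_mul, one_mul, add_zero, zero_add] at h
    exact add_self_eq_zero.mp h
  have h22 : (x ((0, 1), 0)).1.2 = -a := by
    have h := hx ((1, 0), 0) ((0, 1), 0)
    simp only [hypPlaneForm_apply, map_zero, LinearMap.zero_apply, mul_zero, mul_one,
      zero_mul, one_mul, add_zero, zero_add] at h
    rw [ha]
    linear_combination h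
  have hu1 : ∀ u : V, (x ((0, 0), u)).1.1 = -(b v₂ u) := by
    intro u
    have h := hx ((0, 1), 0) ((0, 0), u)
    simp only [hypPlaneForm_apply, map_zero, LinearMap.zero_apply, mul_zero, mul_one,
      zero_mul, one_mul, add_zero, zero_add] at h
    rw [hv₂]
    linear_combination h
  have hu2 : ∀ u : V, (x ((0, 0), u)).1.2 = -(b v₁ u) := by
    intro u
    have h := hx ((1, 0), 0) ((0, 0), u)
    simp only [hypPlaneForm_apply, map_zero, LinearMap.zero_apply, mul_zero, mul_one,
      zero_mul, one_mul, add_zero, zero_add] at h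
    rw [hv₁]
    linear_combination h
  have hTskew : ∀ u u' : V, b (T u) u' + b u (T u') = 0 := by
    intro u u'
    have h := hx ((0, 0), u) ((0, 0), u')
    simp only [hypPlaneForm_apply, map_zero, LinearMap.zero_apply, mul_zero,
      zero_mul, add_zero, zero_add] at h
    rw [hTapp, hTapp]
    exact h
  have hxα : x ((1, 0), 0) = ((a, 0), v₁) := by
    rw [Prod.ext_iff, Prod.ext_iff]
    exact ⟨⟨rfl, h12⟩, rfl⟩
  have hxβ : x ((0, 1), 0) = ((0, -a), v₂) := by
    rw [Prod.ext_iff, Prod.ext_iff]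
    exact ⟨⟨h21, h22⟩, rfl⟩
  have hxu : ∀ u : V, x ((0, 0), u) = ((-(b v₂ u), -(b v₁ u)), T u) := by
    intro u
    rw [Prod.ext_iff, Prod.ext_iff]
    exact ⟨⟨hu1 u, hu2 u⟩, (hTapp u).symm⟩
  have hdecomp : x = Eop b v₁ + Fop b v₂ + a • Dop K V + Mop K T := by
    apply LinearMap.ext
    intro p
    have hp : p = p.1.1 • ((((1 : K), (0 : K)), (0 : V)) : (K × K) × V)
        + p.1.2 • (((0, 1), 0) : (K × K) × V) + (((0, 0), p.2) : (K × K) × V) := by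
      rw [Prod.ext_iff, Prod.ext_iff]
      simp
    conv_lhs => rw [hp]
    rw [map_add, map_add, map_smul, map_smul, hxα, hxβ, hxu]
    simp only [LinearMap.add_apply, LinearMap.smul_apply, Eop_apply, Fop_apply,
      Dop_apply, Mop_apply, Prod.smul_mk, smul_eq_mul]
    rw [Prod.ext_iff, Prod.ext_iff]
    refine ⟨⟨?_, ?_⟩, ?_⟩
    · simp only [Prod.fst_add, Prod.snd_add]
      simp
      ring
    · simp only [Prod.fst_add, Prod.snd_add]
      simp
      ring
    · simp only [Prod.fst_add, Prod.snd_add]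
      simp
  rw [hdecomp]
  exact add_mem (add_mem (add_mem (hEmem v₁) (hFmem v₂)) (SP.smul_mem a hDmem))
    (hMmem T hTskew)
end
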